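/- In the cyclic Kautz digraph CK(d,3) with d ≥ 3, the distance from a vertex x₁x₂x₃ to the vertex x₃x₂y₃ (where y₃ ≠ x₂, x₃) is exactly 5. -/
import Mathlib


/-- Vertex of `CK(d,3)`: a triple with `x₁ ≠ x₂`, `x₂ ≠ x₃`, `x₁ ≠ x₃`. -/
abbrev ck3Vert {n : ℕ} (x : Fin 3 → Fin n) : Prop :=
  x 0 ≠ x 1 ∧ x 1 ≠ x 2 ∧ x 0 ≠ x 2

/-- Arc of `CK(d,3)`: `x₁x₂x₃ → x₂x₃y` with `y ≠ x₂, x₃`. -/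
abbrev ck3Adj {n : ℕ} (x y : Fin 3 → Fin n) : Prop :=
  y 0 = x 1 ∧ y 1 = x 2 ∧ y 2 ≠ x 1 ∧ y 2 ≠ x 2

/-- A walk of length `k` in `CK(d,3)` from `u` to `v`. -/
abbrev ck3Walk {n : ℕ} (k : ℕ) (u v : Fin 3 → Fin n) : Prop :=
  ∃ w : Fin (k + 1) → Fin 3 → Fin n, w 0 = u ∧ w (Fin.last k) = v ∧
    (∀ i, ck3Vert (w i)) ∧ ∀ i j : Fin (k + 1), j.val = i.val + 1 → ck3Adj (w i) (w j)

/-- In `CK(d,3)` with `d ≥ 3`, the distance from a vertex `x₁x₂x₃` to the vertex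
`x₃x₂y₃` (where `y₃ ≠ x₂, x₃`) is exactly `5`. -/
theorem stmt14 (d : ℕ) (hd : 3 ≤ d) (x y : Fin 3 → Fin (d + 1))
    (hx : ck3Vert x) (hy0 : y 0 = x 2) (hy1 : y 1 = x 1)
    (hy2 : y 2 ≠ x 1) (hy2' : y 2 ≠ x 2) :
    ck3Walk 5 x y ∧ ∀ k < 5, ¬ ck3Walk k x y := by
  obtain ⟨h01, h12, h02⟩ := hx
  constructor
  · -- find a fresh symbol b ∉ {x 0, x 1, x 2}
    have hcard : ({x 0, x 1, x 2} : Finset (Fin (d + 1))).card < Fintype.card (Fin (d + 1)) := by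
      have h3 : ({x 0, x 1, x 2} : Finset (Fin (d + 1))).card ≤ 3 :=
        le_trans (Finset.card_insert_le _ _) (Nat.add_le_add_right Finset.card_le_two 1)
      simp only [Fintype.card_fin]
      omega
    obtain ⟨b, hb⟩ : ∃ b, b ∉ ({x 0, x 1, x 2} : Finset (Fin (d + 1))) := by
      by_contra h
      push_neg at h
      have hsub : (Finset.univ : Finset (Fin (d + 1))) ⊆ {x 0, x 1, x 2} := fun a _ => h a
      have := Finset.card_le_card hsub
      rw [Finset.card_univ] at this
      omega
    simp only [Finset.mem_insert, Finset.mem_singleton, not_or] at hb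
    obtain ⟨hb0, hb1, hb2⟩ := hb
    refine ⟨![![x 0, x 1, x 2], ![x 1, x 2, x 0], ![x 2, x 0, b],
            ![x 0, b, x 2], ![b, x 2, x 1], ![x 2, x 1, y 2]], ?_, ?_, ?_, ?_⟩
    · funext i; fin_cases i <;> rfl
    · funext i
      fin_cases i
      · show x 2 = y 0; exact hy0.symm
      · show x 1 = y 1; exact hy1.symm
      · show y 2 = y 2; rfl
    · intro i
      fin_cases i
      · exact ⟨h01, h12, h02⟩
      · exact ⟨h12, Ne.symm h02, Ne.symm h01⟩
      · exact ⟨Ne.symm h02, Ne.symm hb0, Ne.symm hb2⟩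
      · exact ⟨Ne.symm hb0, hb2, h02⟩
      · exact ⟨hb2, Ne.symm h12, hb1⟩
      · exact ⟨Ne.symm h12, Ne.symm hy2, Ne.symm hy2'⟩
    · intro i j hij
      fin_cases i
      · have hj : j = ⟨1, by decide⟩ := Fin.ext (by simpa using hij)
        subst hj; exact ⟨rfl, rfl, h01, h02⟩
      · have hj : j = ⟨2, by decide⟩ := Fin.ext (by simpa using hij)
        subst hj; exact ⟨rfl, rfl, hb2, hb0⟩
      · have hj : j = ⟨3, by decide⟩ := Fin.ext (by simpa using hij)
        subst hj; exact ⟨rfl, rfl, Ne.symm h02, fun h => hb2 h.symm⟩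
      · have hj : j = ⟨4, by decide⟩ := Fin.ext (by simpa using hij)
        subst hj; exact ⟨rfl, rfl, Ne.symm hb1, h12⟩
      · have hj : j = ⟨5, by decide⟩ := Fin.ext (by simpa using hij)
        subst hj; exact ⟨rfl, rfl, hy2', hy2⟩
      · have hij' : (j : ℕ) = 6 := by simpa using hij
        have := j.isLt
        omega
  · intro k hk ⟨w, hw0, hwl, hv, ha⟩
    interval_cases k
    · -- k = 0 : x = y
      have hxy : x = y := hw0 ▸ hwl
      exact h02 ((congrFun hxy 0).trans hy0)
    · -- k = 1
      have h := ha 0 1 rfl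
      have hw1 : w 1 = y := hwl
      rw [hw0, hw1] at h
      exact h12 (hy0.symm.trans h.1).symm
    · -- k = 2
      have h01' := ha 0 1 rfl
      have h12' := ha 1 2 rfl
      have hw2 : w 2 = y := hwl
      rw [hw0] at h01'
      rw [hw2] at h12'
      exact h01'.2.2.1 (h12'.2.1.symm.trans hy1)
    · -- k = 3
      have h01' := ha 0 1 rfl
      have h12' := ha 1 2 rfl
      have h23' := ha 2 3 rfl
      have hw3 : w 3 = y := hwl
      rw [hw0] at h01'
      rw [hw3] at h23'
      exact h01'.2.2.2 ((hy0.symm.trans h23'.1).trans h12'.2.1).symm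
    · -- k = 4
      have h01' := ha 0 1 rfl
      have h12' := ha 1 2 rfl
      have h23' := ha 2 3 rfl
      have h34' := ha 3 4 rfl
      have hw4 : w 4 = y := hwl
      rw [hw0] at h01'
      rw [hw4] at h34'
      have e1 : w 2 2 = x 2 := ((hy0.symm.trans h34'.1).trans h23'.2.1).symm
      have e2 : w 1 1 = x 2 := h01'.2.1
      exact h12'.2.2.1 (e1.trans e2.symm)
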